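/- Let c > 1 and let a, b ≥ 0 satisfy a − 2b > log 4 + log(c/(c−1)). Then (a,b) is a good pair, and for every n ≥ 2 and every (a,b)-good chain x₀,…,xₙ in the hyperbolic upper half-plane ℍ², one has |τ(x₀,…,xₙ)| ≤ 8c·(n−2)·e^{2b−a}. -/

import Mathlib

open UpperHalfPlane Real Filter

/-- The tension of the chain `x 0, x 1, …, x n`:
`τ = Σ_{j=1}^{n−1} d(x_{j−1},x_{j+1}) − Σ_{j=2}^{n−1} d(x_{j−1},x_j) − d(x_0,x_n)`. -/
noncomputable def tension (n : ℕ) (x : ℕ → UpperHalfPlane) : ℝ :=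
  (∑ j ∈ Finset.range (n - 1), dist (x j) (x (j + 2)))
    - (∑ j ∈ Finset.range (n - 2), dist (x (j + 1)) (x (j + 2)))
    - dist (x 0) (x n)

/-- The Gromov product `⟨x,y⟩_z = (d(x,z)+d(z,y)−d(x,y))/2`. -/
noncomputable def gromov (x y z : UpperHalfPlane) : ℝ :=
  (dist x z + dist z y - dist x y) / 2

/-- A pair `(a,b)` is good if `a, b ≥ 0` and `sinh(a−b) > 2·sinh(a/2)`. -/
def GoodPair (a b : ℝ) : Prop :=
  0 ≤ a ∧ 0 ≤ b ∧ Real.sinh (a - b) > 2 * Real.sinh (a / 2)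

/-- The chain `x 0, …, x n` is `(a,b)`-good. -/
def GoodChain (a b : ℝ) (n : ℕ) (x : ℕ → UpperHalfPlane) : Prop :=
  (∀ j < n, dist (x (j + 1)) (x j) ≥ a) ∧
  (∀ j, 1 ≤ j → j + 1 ≤ n → gromov (x (j - 1)) (x (j + 1)) (x j) ≤ b)

namespace AvalancheAux

/-! ### Elementary real inequalities -/

lemma sinh_le_half_exp (t : ℝ) : Real.sinh t ≤ Real.exp t / 2 := by
  rw [Real.sinh_eq]
  have := Real.exp_pos (-t)
  linarith

lemma half_exp_le_cosh (t : ℝ) : Real.exp t / 2 ≤ Real.cosh t := by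
  rw [Real.cosh_eq]
  have := Real.exp_pos (-t)
  linarith

lemma exp_mul_sinh_le (v t : ℝ) (ht : 0 ≤ t) : Real.exp t * Real.sinh v ≤ Real.sinh (v + t) := by
  rw [Real.sinh_eq, Real.sinh_eq]
  rw [show -(v+t) = -v + -t by ring, Real.exp_add, Real.exp_add]
  have h1 : Real.exp (-t) ≤ Real.exp t := Real.exp_le_exp.2 (by linarith)
  have h2 := Real.exp_pos (-v)
  nlinarith [Real.exp_pos v, Real.exp_pos t]

lemma sinh_le_exp_mul_cosh (u v : ℝ) : Real.sinh u ≤ Real.exp (u - v) * Real.cosh v := by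
  have h1 : Real.sinh u ≤ Real.exp u / 2 := sinh_le_half_exp u
  have h2 : Real.exp v / 2 ≤ Real.cosh v := half_exp_le_cosh v
  have h3 : Real.exp (u - v) * (Real.exp v / 2) = Real.exp u / 2 := by
    rw [mul_div_assoc', ← Real.exp_add, sub_add_cancel]
  nlinarith [Real.exp_pos (u - v)]

lemma exp_mul_sinh_mul_le (u v : ℝ) (hu : 0 ≤ u) :
    Real.exp (u - v) * Real.sinh v * (1 - Real.exp (-(2 * u))) ≤ Real.sinh u := by
  have h1 : Real.sinh v ≤ Real.exp v / 2 := sinh_le_half_exp v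
  have hfac : 0 ≤ 1 - Real.exp (-(2 * u)) := by
    have : Real.exp (-(2 * u)) ≤ 1 := Real.exp_le_one_iff.2 (by linarith)
    linarith
  have h2 : Real.exp (u - v) * (Real.exp v / 2) * (1 - Real.exp (-(2 * u))) = Real.sinh u := by
    have e1 : Real.exp (u - v) * Real.exp v = Real.exp u := by
      rw [← Real.exp_add, sub_add_cancel]
    have e2 : Real.exp u * Real.exp (-(2*u)) = Real.exp (-u) := by
      rw [← Real.exp_add]; ring_nf
    rw [Real.sinh_eq]
    nlinarith [e1, e2]
  nlinarith [Real.exp_pos (u - v), mul_le_mul_of_nonneg_left h1 (Real.exp_pos (u-v)).le]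

lemma exp_combine (s A B C : ℝ) (h : A + B = C) :
    s * Real.exp A * Real.exp B = s * Real.exp C := by
  rw [mul_assoc, ← Real.exp_add, h]

lemma nonneg_of_mul_eq {d D S : ℝ} (hD : 0 < D) (hS : 0 ≤ S) (key : d * D = S) : 0 ≤ d := by
  by_contra hcon
  push_neg at hcon
  have : d * D < 0 := mul_neg_of_neg_of_pos hcon hD
  linarith

/-! ### Polynomial inequalities on `(0, 1/4)` -/

lemma polyF1 (x : ℝ) (h0 : 0 < x) (h4 : x < 1/4) :
    (1-2*x)^3 ≤ 4*(1+4*x)*(1-3*x)^2*(1-x)^2 := by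
  nlinarith [sq_nonneg x, sq_nonneg (1-3*x), sq_nonneg (1-4*x), sq_nonneg (x*(1-4*x)),
    sq_nonneg (x*x)]

lemma polyF2 (x : ℝ) (h0 : 0 < x) (h4 : x < 1/4) :
    (1-2*x)^2*(2-9*x+8*x^2) ≤ 4*(3-8*x)*(1-3*x)^2*(1-x)^2 := by
  nlinarith [sq_nonneg x, sq_nonneg (1-3*x), sq_nonneg (1-4*x), sq_nonneg (x*(1-4*x)),
    sq_nonneg (x*x)]

lemma polyF3 (x : ℝ) (h0 : 0 < x) (h4 : x < 1/4) :
    x*(1-2*x)^2 < 4*(1-3*x)^2*(1-x)^2 := by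
  nlinarith [sq_nonneg x, sq_nonneg (1-4*x), sq_nonneg (x*(1-4*x))]

lemma poly_one (x : ℝ) (h0 : 0 < x) (h4 : x < 1/4) :
    (1-4*x) * ((1 + x/(1-2*x)) * (1+x))
      ≤ (1 - x*(1-2*x)^2/(4*(1-3*x)^2*(1-x)^2)) * (1-x) := by
  have h2 : (0:ℝ) < 1-2*x := by linarith
  have h3 : (0:ℝ) < 1-3*x := by linarith
  have h1 : (0:ℝ) < 1-x := by linarith
  have hW : (0:ℝ) < 4*(1-3*x)^2*(1-x)^2 := by positivity
  have key : ((1 - x*(1-2*x)^2/(4*(1-3*x)^2*(1-x)^2)) * (1-x)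
        - (1-4*x) * ((1 + x/(1-2*x)) * (1+x))) * ((1-2*x) * (4*(1-3*x)^2*(1-x)^2))
      = x*(1-x)*((1+4*x)*(4*(1-3*x)^2*(1-x)^2) - (1-2*x)^3) := by
    field_simp [show 1-x*2 ≠ 0 by linarith, show 1-x*3 ≠ 0 by linarith, show 1-x ≠ 0 by linarith]
    ring
  have hS : 0 ≤ x*(1-x)*((1+4*x)*(4*(1-3*x)^2*(1-x)^2) - (1-2*x)^3) := by
    have := polyF1 x h0 h4
    have : 0 ≤ (1+4*x)*(4*(1-3*x)^2*(1-x)^2) - (1-2*x)^3 := by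
      nlinarith [polyF1 x h0 h4]
    positivity
  have := nonneg_of_mul_eq (by positivity : (0:ℝ) < (1-2*x) * (4*(1-3*x)^2*(1-x)^2)) hS key
  linarith

lemma poly_two (x : ℝ) (h0 : 0 < x) (h4 : x < 1/4) :
    (1 + x*(1-2*x)^2/(4*(1-3*x)^2*(1-x)^2)) * (1-4*x)
      ≤ (1 - x*(1-2*x)^2/(4*(1-3*x)^2*(1-x)^2)) * (1 - x/(1-2*x)) := by
  have h2 : (0:ℝ) < 1-2*x := by linarith
  have h3 : (0:ℝ) < 1-3*x := by linarith
  have h1 : (0:ℝ) < 1-x := by linarith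
  have key : ((1 - x*(1-2*x)^2/(4*(1-3*x)^2*(1-x)^2)) * (1 - x/(1-2*x))
        - (1 + x*(1-2*x)^2/(4*(1-3*x)^2*(1-x)^2)) * (1-4*x)) * ((1-2*x) * (4*(1-3*x)^2*(1-x)^2))
      = x*(4*(3-8*x)*(1-3*x)^2*(1-x)^2 - (1-2*x)^2*(2-9*x+8*x^2)) := by
    field_simp [show 1-x*2 ≠ 0 by linarith, show 1-x*3 ≠ 0 by linarith, show 1-x ≠ 0 by linarith]
    ring
  have hS : 0 ≤ x*(4*(3-8*x)*(1-3*x)^2*(1-x)^2 - (1-2*x)^2*(2-9*x+8*x^2)) := by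
    have : 0 ≤ 4*(3-8*x)*(1-3*x)^2*(1-x)^2 - (1-2*x)^2*(2-9*x+8*x^2) := by
      nlinarith [polyF2 x h0 h4]
    positivity
  have := nonneg_of_mul_eq (by positivity : (0:ℝ) < (1-2*x) * (4*(1-3*x)^2*(1-x)^2)) hS key
  linarith

/-! ### The Ptolemy inequality on the hyperbolic plane -/

lemma complex_ptolemy (w x y z : ℂ) :
    dist w y * dist x z ≤ dist w z * dist x y + dist w x * dist y z := by
  simp only [Complex.dist_eq]
  have key : (w - y) * (x - z) = (w - z) * (x - y) + (w - x) * (y - z) := by ring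
  calc ‖w - y‖ * ‖x - z‖
      = ‖(w - z) * (x - y) + (w - x) * (y - z)‖ := by
        rw [← norm_mul, key]
    _ ≤ ‖(w - z) * (x - y)‖ + ‖(w - x) * (y - z)‖ := by
        apply norm_add_le
    _ = ‖w - z‖ * ‖x - y‖ + ‖w - x‖ * ‖y - z‖ := by
        rw [norm_mul, norm_mul]

noncomputable def sig (z w : ℍ) : ℝ := Real.sinh (dist z w / 2)

lemma sig_nonneg (z w : ℍ) : 0 ≤ sig z w := Real.sinh_nonneg_iff.2 (by positivity)

lemma sig_comm (z w : ℍ) : sig z w = sig w z := by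
  unfold sig; rw [UpperHalfPlane.dist_comm]

lemma sig_eq (z w : ℍ) : sig z w = dist (z : ℂ) w / (2 * (Real.sqrt z.im * Real.sqrt w.im)) := by
  unfold sig
  rw [UpperHalfPlane.sinh_half_dist, Real.sqrt_mul z.im_pos.le]

lemma sig_ptolemy (w x y z : ℍ) :
    sig w y * sig x z ≤ sig w z * sig x y + sig w x * sig y z := by
  have hP := complex_ptolemy (w : ℂ) x y z
  have hw := Real.sqrt_pos.2 w.im_pos
  have hx := Real.sqrt_pos.2 x.im_pos
  have hy := Real.sqrt_pos.2 y.im_pos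
  have hz := Real.sqrt_pos.2 z.im_pos
  simp only [sig_eq]
  rw [div_mul_div_comm, div_mul_div_comm, div_mul_div_comm]
  have e1 : 2 * (Real.sqrt w.im * Real.sqrt y.im) * (2 * (Real.sqrt x.im * Real.sqrt z.im))
      = 4 * (Real.sqrt w.im * Real.sqrt x.im * Real.sqrt y.im * Real.sqrt z.im) := by ring
  have e2 : 2 * (Real.sqrt w.im * Real.sqrt z.im) * (2 * (Real.sqrt x.im * Real.sqrt y.im))
      = 4 * (Real.sqrt w.im * Real.sqrt x.im * Real.sqrt y.im * Real.sqrt z.im) := by ring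
  have e3 : 2 * (Real.sqrt w.im * Real.sqrt x.im) * (2 * (Real.sqrt y.im * Real.sqrt z.im))
      = 4 * (Real.sqrt w.im * Real.sqrt x.im * Real.sqrt y.im * Real.sqrt z.im) := by ring
  rw [e1, e2, e3, ← add_div, div_le_div_iff_of_pos_right (by positivity)]
  exact hP

/-! ### Gromov product basics -/

lemma gromov_nonneg (x y z : ℍ) : 0 ≤ gromov x y z := by
  unfold gromov
  have := dist_triangle x z y
  linarith

lemma gromov_comm (x y z : ℍ) : gromov x y z = gromov y x z := by
  unfold gromov
  rw [dist_comm x z, dist_comm z y, dist_comm x y]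
  ring

lemma dist_eq_gromov (x y z : ℍ) : dist x y = dist x z + dist z y - 2 * gromov x y z := by
  unfold gromov; ring

lemma sig_jump (y1 y2 y3 : ℍ) (h0 : 0 ≤ dist y2 y3 - 2 * gromov y1 y3 y2) :
    Real.exp ((dist y2 y3 - 2 * gromov y1 y3 y2) / 2) * sig y1 y2 ≤ sig y1 y3 := by
  have hd : dist y1 y3 = dist y1 y2 + (dist y2 y3 - 2 * gromov y1 y3 y2) := by
    unfold gromov; ring
  unfold sig
  have h := exp_mul_sinh_le (dist y1 y2 / 2) ((dist y2 y3 - 2 * gromov y1 y3 y2) / 2)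
    (by linarith)
  rw [show dist y1 y2 / 2 + (dist y2 y3 - 2 * gromov y1 y3 y2) / 2
      = (dist y1 y2 + (dist y2 y3 - 2 * gromov y1 y3 y2)) / 2 by ring] at h
  rw [hd]
  exact h

lemma exp_neg_le_of_sinh_ge {P aa εx Nn : ℝ} (hN : 1 ≤ Nn)
    (hea : Real.exp (-aa) ≤ εx) (hε1 : εx < 1)
    (hsinh : Nn * Real.sinh (aa / 2) ≤ Real.sinh (P / 2)) :
    Real.exp (-P) ≤ εx / (Nn ^ 2 * (1 - εx) ^ 2) := by
  have hε0 : 0 < εx := lt_of_lt_of_le (Real.exp_pos _) hea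
  have key : Nn * Real.exp (aa / 2) * (1 - εx) ≤ Real.exp (P / 2) := by
    have e1 : Real.exp (aa / 2) * Real.exp (-aa) = Real.exp (-(aa / 2)) := by
      rw [← Real.exp_add]; ring_nf
    have e2 : Real.exp (aa / 2) * (1 - εx) ≤ Real.exp (aa / 2) - Real.exp (-(aa / 2)) := by
      have := mul_le_mul_of_nonneg_left hea (Real.exp_pos (aa / 2)).le
      nlinarith
    have e3 : Nn * (Real.exp (aa / 2) - Real.exp (-(aa / 2))) = 2 * (Nn * Real.sinh (aa / 2)) := by
      rw [Real.sinh_eq]; ring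
    have e4 : 2 * Real.sinh (P / 2) ≤ Real.exp (P / 2) := by
      rw [Real.sinh_eq]
      have := Real.exp_pos (-(P / 2))
      linarith
    calc Nn * Real.exp (aa / 2) * (1 - εx) ≤ Nn * (Real.exp (aa / 2) - Real.exp (-(aa / 2))) := by
          nlinarith
      _ = 2 * (Nn * Real.sinh (aa / 2)) := e3
      _ ≤ 2 * Real.sinh (P / 2) := by linarith
      _ ≤ Real.exp (P / 2) := e4
  have h2 : Real.exp (-(P / 2)) * (Nn * (1 - εx)) ≤ Real.exp (-(aa / 2)) := by
    have hmul := mul_le_mul_of_nonneg_left key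
      (mul_nonneg (Real.exp_pos (-(P/2))).le (Real.exp_pos (-(aa/2))).le)
    have i1 : Real.exp (-(P/2)) * Real.exp (P / 2) = 1 := by
      rw [← Real.exp_add]; simp
    have i2 : Real.exp (-(aa/2)) * Real.exp (aa / 2) = 1 := by
      rw [← Real.exp_add]; simp
    nlinarith [hmul, i1, i2, Real.exp_pos (-(P/2)), Real.exp_pos (-(aa/2))]
  have hN0 : (0:ℝ) < Nn := lt_of_lt_of_le one_pos hN
  have h1ε : (0:ℝ) < 1 - εx := by linarith
  have hden : (0:ℝ) < Nn ^ 2 * (1 - εx) ^ 2 := mul_pos (pow_pos hN0 2) (pow_pos h1ε 2)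
  have h3 : Real.exp (-P) = Real.exp (-(P / 2)) ^ 2 := by
    rw [sq, ← Real.exp_add]; ring_nf
  have h4 : Real.exp (-aa) = Real.exp (-(aa / 2)) ^ 2 := by
    rw [sq, ← Real.exp_add]; ring_nf
  rw [le_div_iff₀ hden, h3]
  calc Real.exp (-(P / 2)) ^ 2 * (Nn ^ 2 * (1 - εx) ^ 2)
      = (Real.exp (-(P / 2)) * (Nn * (1 - εx))) ^ 2 := by ring
    _ ≤ Real.exp (-(aa / 2)) ^ 2 := by
        apply pow_le_pow_left₀ (by positivity) h2 2
    _ ≤ εx := by rw [← h4]; exact hea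

lemma cosh_le_sinh_of_exp_neg_le {P q : ℝ} (hq : Real.exp (-P) ≤ q) :
    Real.cosh (P / 2) * (1 - q) ≤ Real.sinh (P / 2) * (1 + q) := by
  have e1 : Real.exp (-(P / 2)) = Real.exp (-P) * Real.exp (P / 2) := by
    rw [← Real.exp_add]; ring_nf
  rw [Real.cosh_eq, Real.sinh_eq]
  nlinarith [Real.exp_pos (P / 2), Real.exp_pos (-P), Real.exp_pos (-(P/2)),
    mul_le_mul_of_nonneg_right hq (Real.exp_pos (P/2)).le]


lemma chain_inv (a b ε : ℝ) (n : ℕ) (x : ℕ → ℍ) (hb : 0 ≤ b)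
    (hεdef : Real.exp (2*b-a) = ε) (hε4 : ε < 1/4)
    (hd : ∀ k, k < n → a ≤ dist (x k) (x (k+1)))
    (hG : ∀ k, k+2 ≤ n → gromov (x k) (x (k+2)) (x (k+1)) ≤ b) :
    ∀ k : ℕ,
      (k+1 ≤ n → Real.sinh (a/2) * (2*(1-3*ε)/(1-2*ε))^k ≤ sig (x 0) (x (k+1))) ∧
      (k+2 ≤ n → sig (x 0) (x k) * sig (x (k+1)) (x (k+2))
          ≤ ε/(1-2*ε) * (sig (x 0) (x (k+1)) * sig (x k) (x (k+2)))) := by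
  have hε0 : 0 < ε := hεdef ▸ Real.exp_pos _
  have h2ε : (0:ℝ) < 1-2*ε := by linarith
  have h3ε : (0:ℝ) < 1-3*ε := by linarith
  have h1ε : (0:ℝ) < 1-ε := by linarith
  set R := ε/(1-2*ε) with hR
  set N := 2*(1-3*ε)/(1-2*ε) with hN
  have hR0 : 0 < R := div_pos hε0 h2ε
  have h1R : 1 - R = (1-3*ε)/(1-2*ε) := by rw [hR]; field_simp [show 1-ε*2 ≠ 0 by linarith]; ring
  have h1R0 : 0 < 1 - R := by rw [h1R]; exact div_pos h3ε h2ε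
  have hN2 : N = 2*(1-R) := by rw [h1R, hN]; ring
  have hN1 : 1 ≤ N := by rw [hN, le_div_iff₀ h2ε]; linarith
  have hRR : ε ≤ R*(1-R) := by
    have key : (R*(1-R) - ε) * ((1-2*ε)^2) = ε*ε*(1-4*ε) := by
      rw [hR]; field_simp [show 1-ε*2 ≠ 0 by linarith]; ring
    have hS : 0 ≤ ε*ε*(1-4*ε) := mul_nonneg (mul_nonneg hε0.le hε0.le) (by linarith)
    have := nonneg_of_mul_eq (by positivity : (0:ℝ) < (1-2*ε)^2) hS key
    linarith
  -- exp facts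
  have hεinv : ε * Real.exp (a-2*b) = 1 := by
    rw [← hεdef, ← Real.exp_add, show 2*b-a+(a-2*b) = 0 by ring, Real.exp_zero]
  have hab : 2*b < a := by
    by_contra hcon
    push_neg at hcon
    have : Real.exp (a-2*b) ≤ 1 := Real.exp_le_one_iff.2 (by linarith)
    nlinarith [Real.exp_pos (a-2*b)]
  have ha0 : 0 < a := by linarith
  have hsa : 0 < Real.sinh (a/2) := by
    have : Real.sinh 0 < Real.sinh (a/2) := Real.sinh_lt_sinh.2 (by linarith)
    simpa using this
  have h2exp : (2:ℝ) ≤ Real.exp ((a-2*b)/2) := by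
    have hsq : Real.exp ((a-2*b)/2)^2 = Real.exp (a-2*b) := by
      rw [sq, ← Real.exp_add]; ring_nf
    nlinarith [Real.exp_pos ((a-2*b)/2), Real.exp_pos (a-2*b)]
  have hE : ∀ k, k < n → Real.sinh (a/2) ≤ sig (x k) (x (k+1)) := by
    intro k hk
    unfold sig
    exact Real.sinh_le_sinh.2 (by linarith [hd k hk])
  have hE0 : ∀ k, k < n → 0 < sig (x k) (x (k+1)) := fun k hk => lt_of_lt_of_le hsa (hE k hk)
  -- jump : m_k ≥ 2 E_k
  have hjump : ∀ k, k+2 ≤ n → 2 * sig (x k) (x (k+1)) ≤ sig (x k) (x (k+2)) := by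
    intro k hk
    have hgb := hG k hk
    have hg0 := gromov_nonneg (x k) (x (k+2)) (x (k+1))
    have hda := hd (k+1) (by omega)
    have h0 : 0 ≤ dist (x (k+1)) (x (k+2)) - 2*gromov (x k) (x (k+2)) (x (k+1)) := by linarith
    have hj := sig_jump (x k) (x (k+1)) (x (k+2)) h0
    have h2' : (2:ℝ) ≤ Real.exp ((dist (x (k+1)) (x (k+2))
        - 2*gromov (x k) (x (k+2)) (x (k+1)))/2) :=
      le_trans h2exp (Real.exp_le_exp.2 (by linarith))
    nlinarith [sig_nonneg (x k) (x (k+1)), hE0 k (by omega)]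
  -- product of two jumps
  have hmm : ∀ k, k+3 ≤ n →
      sig (x k) (x (k+1)) * sig (x (k+2)) (x (k+3))
        ≤ ε * (sig (x k) (x (k+2)) * sig (x (k+1)) (x (k+3))) := by
    intro k hk
    have hgb1 := hG k (by omega)
    have hg01 := gromov_nonneg (x k) (x (k+2)) (x (k+1))
    have hgb2 : gromov (x (k+1)) (x (k+3)) (x (k+2)) ≤ b := hG (k+1) (by omega)
    have hg02 := gromov_nonneg (x (k+1)) (x (k+3)) (x (k+2))
    have hd1 := hd (k+1) (by omega)
    have j1 := sig_jump (x k) (x (k+1)) (x (k+2)) (by linarith)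
    have j2 := sig_jump (x (k+3)) (x (k+2)) (x (k+1))
      (by
        rw [gromov_comm, dist_comm]
        linarith)
    rw [gromov_comm, dist_comm, sig_comm (x (k+3)) (x (k+2)), sig_comm (x (k+3)) (x (k+1))] at j2
    set s1 := (dist (x (k+1)) (x (k+2)) - 2 * gromov (x k) (x (k+2)) (x (k+1)))/2 with hs1
    set s2 := (dist (x (k+1)) (x (k+2)) - 2 * gromov (x (k+1)) (x (k+3)) (x (k+2)))/2 with hs2
    have key : 1 ≤ ε * (Real.exp s1 * Real.exp s2) := by
      rw [← Real.exp_add]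
      have hss : a - 2*b ≤ s1 + s2 := by rw [hs1, hs2]; linarith
      calc (1:ℝ) = ε * Real.exp (a-2*b) := hεinv.symm
        _ ≤ ε * Real.exp (s1+s2) := by
            apply mul_le_mul_of_nonneg_left (Real.exp_le_exp.2 hss) hε0.le
    calc sig (x k) (x (k+1)) * sig (x (k+2)) (x (k+3))
        = 1 * (sig (x k) (x (k+1)) * sig (x (k+2)) (x (k+3))) := by ring
      _ ≤ (ε * (Real.exp s1 * Real.exp s2)) * (sig (x k) (x (k+1)) * sig (x (k+2)) (x (k+3))) := by
          apply mul_le_mul_of_nonneg_right key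
            (mul_nonneg (sig_nonneg _ _) (sig_nonneg _ _))
      _ = ε * ((Real.exp s1 * sig (x k) (x (k+1))) * (Real.exp s2 * sig (x (k+2)) (x (k+3)))) := by
          ring
      _ ≤ ε * (sig (x k) (x (k+2)) * sig (x (k+1)) (x (k+3))) := by
          apply mul_le_mul_of_nonneg_left ?_ hε0.le
          apply mul_le_mul j1 j2 (mul_nonneg (Real.exp_pos _).le (sig_nonneg _ _)) (sig_nonneg _ _)
  intro k
  induction k with
  | zero =>
    constructor
    · intro h1n
      simpa using hE 0 (by omega)
    · intro h2n
      have hz : sig (x 0) (x 0) = 0 := by unfold sig; simp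
      rw [hz, zero_mul]
      exact mul_nonneg hR0.le (mul_nonneg (sig_nonneg _ _) (sig_nonneg _ _))
  | succ k ih =>
    have step1 : k+2 ≤ n → (1-R) * (sig (x 0) (x (k+1)) * sig (x k) (x (k+2)))
        ≤ sig (x 0) (x (k+2)) * sig (x k) (x (k+1)) := by
      intro hkn
      have pt := sig_ptolemy (x 0) (x k) (x (k+1)) (x (k+2))
      have invk := ih.2 hkn
      nlinarith [pt, invk]
    constructor
    · intro hk1n
      have s1 := step1 hk1n
      have hj := hjump k hk1n
      have hEk := hE0 k (by omega)
      have growth_k : Real.sinh (a/2) * N^k ≤ sig (x 0) (x (k+1)) := ih.1 (by omega)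
      have hu1 : (0:ℝ) ≤ sig (x 0) (x (k+1)) := sig_nonneg _ _
      have h2 : N * sig (x 0) (x (k+1)) * sig (x k) (x (k+1))
          ≤ sig (x 0) (x (k+2)) * sig (x k) (x (k+1)) := by
        rw [hN2]
        calc 2*(1-R) * sig (x 0) (x (k+1)) * sig (x k) (x (k+1))
            = (1-R) * (sig (x 0) (x (k+1)) * (2*sig (x k) (x (k+1)))) := by ring
          _ ≤ (1-R) * (sig (x 0) (x (k+1)) * sig (x k) (x (k+2))) := by
              apply mul_le_mul_of_nonneg_left (mul_le_mul_of_nonneg_left hj hu1) h1R0.le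
          _ ≤ sig (x 0) (x (k+2)) * sig (x k) (x (k+1)) := s1
      have h3 : N * sig (x 0) (x (k+1)) ≤ sig (x 0) (x (k+2)) :=
        le_of_mul_le_mul_right h2 hEk
      calc Real.sinh (a/2) * N^(k+1) = N*(Real.sinh (a/2)*N^k) := by ring
        _ ≤ N * sig (x 0) (x (k+1)) := by
            apply mul_le_mul_of_nonneg_left growth_k (by linarith)
        _ ≤ sig (x 0) (x (k+2)) := h3
    · intro hk2n
      have s1 := step1 (by omega)
      have hm := hmm k hk2n
      have hEk := hE0 k (by omega)
      have main : (sig (x 0) (x (k+1)) * sig (x (k+2)) (x (k+3))) * sig (x k) (x (k+1))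
          ≤ (R * (sig (x 0) (x (k+2)) * sig (x (k+1)) (x (k+3)))) * sig (x k) (x (k+1)) := by
        calc (sig (x 0) (x (k+1)) * sig (x (k+2)) (x (k+3))) * sig (x k) (x (k+1))
            = sig (x 0) (x (k+1)) * (sig (x (k+2)) (x (k+3))) * sig (x k) (x (k+1)) := by ring
          _ = sig (x 0) (x (k+1)) * (sig (x k) (x (k+1)) * sig (x (k+2)) (x (k+3))) := by ring
          _ ≤ sig (x 0) (x (k+1)) * (ε * (sig (x k) (x (k+2)) * sig (x (k+1)) (x (k+3)))) := by
              apply mul_le_mul_of_nonneg_left hm (sig_nonneg _ _)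
          _ ≤ sig (x 0) (x (k+1)) * ((R*(1-R)) * (sig (x k) (x (k+2)) * sig (x (k+1)) (x (k+3)))) := by
              apply mul_le_mul_of_nonneg_left ?_ (sig_nonneg _ _)
              apply mul_le_mul_of_nonneg_right hRR
                (mul_nonneg (sig_nonneg _ _) (sig_nonneg _ _))
          _ = R * ((1-R) * (sig (x 0) (x (k+1)) * sig (x k) (x (k+2)))) * sig (x (k+1)) (x (k+3)) := by
              ring
          _ ≤ R * (sig (x 0) (x (k+2)) * sig (x k) (x (k+1))) * sig (x (k+1)) (x (k+3)) := by
              apply mul_le_mul_of_nonneg_right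
                (mul_le_mul_of_nonneg_left s1 hR0.le) (sig_nonneg _ _)
          _ = (R * (sig (x 0) (x (k+2)) * sig (x (k+1)) (x (k+3)))) * sig (x k) (x (k+1)) := by
              ring
      exact le_of_mul_le_mul_right main hEk


set_option maxHeartbeats 2000000 in
lemma endgame (a b ε P A D g hh u1 : ℝ)
    (hb : 0 ≤ b) (hεdef : Real.exp (2*b-a) = ε) (hε4 : ε < 1/4)
    (hA : a ≤ A) (hD : a ≤ D) (hg0 : 0 ≤ g) (hgb : g ≤ b) (hh0 : 0 ≤ hh)
    (hP0 : 0 ≤ P) (hP'0 : 0 ≤ P + D - 2*hh) (hu1 : 0 ≤ u1)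
    (hsP : 2*(1-3*ε)/(1-2*ε) * Real.sinh (a/2) ≤ Real.sinh (P/2))
    (hsP' : 2*(1-3*ε)/(1-2*ε) * Real.sinh (a/2) ≤ Real.sinh ((P + D - 2*hh)/2))
    (inv : u1 * Real.sinh (D/2)
        ≤ ε/(1-2*ε) * (Real.sinh (P/2) * Real.sinh ((A+D-2*g)/2)))
    (pt1 : Real.sinh (P/2) * Real.sinh ((A+D-2*g)/2)
        ≤ Real.sinh ((P+D-2*hh)/2) * Real.sinh (A/2) + u1 * Real.sinh (D/2))
    (pt2 : Real.sinh ((P+D-2*hh)/2) * Real.sinh (A/2)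
        ≤ Real.sinh (P/2) * Real.sinh ((A+D-2*g)/2) + u1 * Real.sinh (D/2)) :
    Real.exp hh * (1-4*ε) ≤ Real.exp g ∧ Real.exp g * (1-4*ε) ≤ Real.exp hh := by
  have hε0 : 0 < ε := hεdef ▸ Real.exp_pos _
  have h2ε : (0:ℝ) < 1-2*ε := by linarith
  have h3ε : (0:ℝ) < 1-3*ε := by linarith
  have h4ε : (0:ℝ) < 1-4*ε := by linarith
  have h1ε : (0:ℝ) < 1-ε := by linarith
  obtain ⟨R, hR⟩ : ∃ t : ℝ, t = ε/(1-2*ε) := ⟨_, rfl⟩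
  obtain ⟨N, hN⟩ : ∃ t : ℝ, t = 2*(1-3*ε)/(1-2*ε) := ⟨_, rfl⟩
  obtain ⟨p, hp⟩ : ∃ t : ℝ, t = ε*(1-2*ε)^2/(4*(1-3*ε)^2*(1-ε)^2) := ⟨_, rfl⟩
  rw [← hN] at hsP hsP'
  rw [← hR] at inv
  have hR0 : 0 < R := hR ▸ div_pos hε0 h2ε
  have h1R : 1 - R = (1-3*ε)/(1-2*ε) := by rw [hR]; field_simp [show 1-ε*2 ≠ 0 by linarith]; ring
  have h1R0 : 0 < 1 - R := by rw [h1R]; exact div_pos h3ε h2ε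
  have hN1 : 1 ≤ N := by rw [hN, le_div_iff₀ h2ε]; linarith
  have hW : (0:ℝ) < 4*(1-3*ε)^2*(1-ε)^2 := by positivity
  have hp0 : 0 < p := by rw [hp]; positivity
  have hp1 : p < 1 := by
    rw [hp, div_lt_one hW]
    exact polyF3 ε hε0 hε4
  have hpN : ε / (N^2*(1-ε)^2) = p := by
    rw [hp, hN]; field_simp [show 1-ε*2 ≠ 0 by linarith, show 1-ε*3 ≠ 0 by linarith, show 1-ε ≠ 0 by linarith]; ring
  have hεinv : ε * Real.exp (a-2*b) = 1 := by
    rw [← hεdef, ← Real.exp_add, show 2*b-a+(a-2*b) = 0 by ring, Real.exp_zero]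
  have hab : 2*b < a := by
    by_contra hcon
    push_neg at hcon
    have : Real.exp (a-2*b) ≤ 1 := Real.exp_le_one_iff.2 (by linarith)
    nlinarith [Real.exp_pos (a-2*b)]
  have ha0 : 0 < a := by linarith
  have hsa : 0 < Real.sinh (a/2) := by
    have : Real.sinh 0 < Real.sinh (a/2) := Real.sinh_lt_sinh.2 (by linarith)
    simpa using this
  have hea : Real.exp (-a) ≤ ε := by
    have e1 : Real.exp (-a) = Real.exp (2*b-a) * Real.exp (-(2*b)) := by
      rw [← Real.exp_add]; ring_nf
    have e2 : Real.exp (-(2*b)) ≤ 1 := Real.exp_le_one_iff.2 (by linarith)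
    calc Real.exp (-a) = Real.exp (2*b-a) * Real.exp (-(2*b)) := e1
      _ ≤ Real.exp (2*b-a) * 1 := by
          apply mul_le_mul_of_nonneg_left e2 (Real.exp_pos _).le
      _ = ε := by rw [mul_one, hεdef]
  have hsPpos : 0 < Real.sinh (P/2) :=
    lt_of_lt_of_le (mul_pos (lt_of_lt_of_le one_pos hN1) hsa) hsP
  have hsP'pos : 0 < Real.sinh ((P+D-2*hh)/2) :=
    lt_of_lt_of_le (mul_pos (lt_of_lt_of_le one_pos hN1) hsa) hsP'
  have hsA : 0 < Real.sinh (A/2) := by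
    have : Real.sinh 0 < Real.sinh (A/2) := Real.sinh_lt_sinh.2 (by linarith)
    simpa using this
  have hqP : Real.exp (-P) ≤ p := by
    have := exp_neg_le_of_sinh_ge hN1 hea (by linarith) hsP
    rwa [hpN] at this
  have hqP' : Real.exp (-(P+D-2*hh)) ≤ p := by
    have := exp_neg_le_of_sinh_ge hN1 hea (by linarith) hsP'
    rwa [hpN] at this
  have cothP : Real.cosh (P/2) * (1-p) ≤ Real.sinh (P/2) * (1+p) :=
    cosh_le_sinh_of_exp_neg_le hqP
  have cothA : Real.cosh (A/2) * (1-ε) ≤ Real.sinh (A/2) * (1+ε) :=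
    cosh_le_sinh_of_exp_neg_le (le_trans (Real.exp_le_exp.2 (by linarith)) hea)
  have low : (1-R) * (Real.sinh (P/2) * Real.sinh ((A+D-2*g)/2))
      ≤ Real.sinh ((P+D-2*hh)/2) * Real.sinh (A/2) := by linarith [pt1, inv]
  have high : Real.sinh ((P+D-2*hh)/2) * Real.sinh (A/2)
      ≤ (1+R) * (Real.sinh (P/2) * Real.sinh ((A+D-2*g)/2)) := by linarith [pt2, inv]
  constructor
  · -- exp hh * (1-4ε) ≤ exp g
    have mlow : Real.exp ((D-2*g)/2) * Real.sinh (A/2) ≤ Real.sinh ((A+D-2*g)/2) := by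
      have hmono := exp_mul_sinh_le (A/2) ((D-2*g)/2) (by linarith)
      rwa [show A/2 + (D-2*g)/2 = (A+D-2*g)/2 by ring] at hmono
    have uup : Real.sinh ((P+D-2*hh)/2) ≤ Real.exp ((D-2*hh)/2) * Real.cosh (P/2) := by
      have := sinh_le_exp_mul_cosh ((P+D-2*hh)/2) (P/2)
      rwa [show (P+D-2*hh)/2 - P/2 = (D-2*hh)/2 by ring] at this
    have c1 : (1-R) * (Real.sinh (P/2) * (Real.exp ((D-2*g)/2) * Real.sinh (A/2)))
        ≤ (Real.exp ((D-2*hh)/2) * Real.cosh (P/2)) * Real.sinh (A/2) := by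
      calc (1-R) * (Real.sinh (P/2) * (Real.exp ((D-2*g)/2) * Real.sinh (A/2)))
          ≤ (1-R) * (Real.sinh (P/2) * Real.sinh ((A+D-2*g)/2)) := by
            apply mul_le_mul_of_nonneg_left
              (mul_le_mul_of_nonneg_left mlow hsPpos.le) h1R0.le
        _ ≤ Real.sinh ((P+D-2*hh)/2) * Real.sinh (A/2) := low
        _ ≤ (Real.exp ((D-2*hh)/2) * Real.cosh (P/2)) * Real.sinh (A/2) := by
            apply mul_le_mul_of_nonneg_right uup hsA.le
    have c2 : (1-R) * (Real.sinh (P/2) * Real.exp ((D-2*g)/2))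
        ≤ Real.exp ((D-2*hh)/2) * Real.cosh (P/2) := by
      have c1' : ((1-R) * (Real.sinh (P/2) * Real.exp ((D-2*g)/2))) * Real.sinh (A/2)
          ≤ (Real.exp ((D-2*hh)/2) * Real.cosh (P/2)) * Real.sinh (A/2) := by
        calc ((1-R) * (Real.sinh (P/2) * Real.exp ((D-2*g)/2))) * Real.sinh (A/2)
            = (1-R) * (Real.sinh (P/2) * (Real.exp ((D-2*g)/2) * Real.sinh (A/2))) := by ring
          _ ≤ (Real.exp ((D-2*hh)/2) * Real.cosh (P/2)) * Real.sinh (A/2) := c1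
      exact le_of_mul_le_mul_right c1' hsA
    have c3 : (1-R) * Real.sinh (P/2) * Real.exp hh ≤ Real.exp g * Real.cosh (P/2) := by
      have hmul := mul_le_mul_of_nonneg_right c2 (Real.exp_pos (g + hh - D/2)).le
      have eL : ((1-R) * (Real.sinh (P/2) * Real.exp ((D-2*g)/2))) * Real.exp (g+hh-D/2)
          = (1-R) * Real.sinh (P/2) * Real.exp hh := by
        rw [show ((1-R) * (Real.sinh (P/2) * Real.exp ((D-2*g)/2))) * Real.exp (g+hh-D/2)
            = ((1-R) * Real.sinh (P/2)) * Real.exp ((D-2*g)/2) * Real.exp (g+hh-D/2) by ring]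
        rw [exp_combine _ _ _ _ (by ring : (D-2*g)/2 + (g+hh-D/2) = hh)]
      have eR : (Real.exp ((D-2*hh)/2) * Real.cosh (P/2)) * Real.exp (g+hh-D/2)
          = Real.exp g * Real.cosh (P/2) := by
        rw [show (Real.exp ((D-2*hh)/2) * Real.cosh (P/2)) * Real.exp (g+hh-D/2)
            = Real.cosh (P/2) * Real.exp ((D-2*hh)/2) * Real.exp (g+hh-D/2) by ring]
        rw [exp_combine _ _ _ _ (by ring : (D-2*hh)/2 + (g+hh-D/2) = g)]
        ring
      rw [eL, eR] at hmul
      exact hmul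
    have c4 : (1-R)*(1-p) * Real.exp hh ≤ (1+p) * Real.exp g := by
      have c4' : ((1-R)*(1-p) * Real.exp hh) * Real.sinh (P/2)
          ≤ ((1+p) * Real.exp g) * Real.sinh (P/2) := by
        calc ((1-R)*(1-p) * Real.exp hh) * Real.sinh (P/2)
            = ((1-R) * Real.sinh (P/2) * Real.exp hh) * (1-p) := by ring
          _ ≤ (Real.exp g * Real.cosh (P/2)) * (1-p) := by
              apply mul_le_mul_of_nonneg_right c3 (by linarith)
          _ = Real.exp g * (Real.cosh (P/2) * (1-p)) := by ring
          _ ≤ Real.exp g * (Real.sinh (P/2) * (1+p)) := by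
              apply mul_le_mul_of_nonneg_left cothP (Real.exp_pos g).le
          _ = ((1+p) * Real.exp g) * Real.sinh (P/2) := by ring
      exact le_of_mul_le_mul_right c4' hsPpos
    have key : (1+p)*(1-4*ε) ≤ (1-p)*(1-R) := by
      rw [hp, hR]
      exact poly_two ε hε0 hε4
    have t1' : (Real.exp hh * (1-4*ε)) * (1+p) ≤ Real.exp g * (1+p) := by
      calc (Real.exp hh * (1-4*ε)) * (1+p)
          = ((1+p)*(1-4*ε)) * Real.exp hh := by ring
        _ ≤ ((1-p)*(1-R)) * Real.exp hh := by
            apply mul_le_mul_of_nonneg_right key (Real.exp_pos hh).le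
        _ = (1-R)*(1-p) * Real.exp hh := by ring
        _ ≤ (1+p) * Real.exp g := c4
        _ = Real.exp g * (1+p) := by ring
    exact le_of_mul_le_mul_right t1' (by linarith)
  · -- exp g * (1-4ε) ≤ exp hh
    have mup : Real.sinh ((A+D-2*g)/2) ≤ Real.exp ((D-2*g)/2) * Real.cosh (A/2) := by
      have := sinh_le_exp_mul_cosh ((A+D-2*g)/2) (A/2)
      rwa [show (A+D-2*g)/2 - A/2 = (D-2*g)/2 by ring] at this
    have ulow : Real.exp ((D-2*hh)/2) * Real.sinh (P/2) * (1 - Real.exp (-(P+D-2*hh)))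
        ≤ Real.sinh ((P+D-2*hh)/2) := by
      have := exp_mul_sinh_mul_le ((P+D-2*hh)/2) (P/2) (by linarith)
      rwa [show (P+D-2*hh)/2 - P/2 = (D-2*hh)/2 by ring,
        show -(2*((P+D-2*hh)/2)) = -(P+D-2*hh) by ring] at this
    have d1 : (Real.exp ((D-2*hh)/2) * Real.sinh (P/2) * (1 - Real.exp (-(P+D-2*hh))))
          * Real.sinh (A/2)
        ≤ (1+R) * (Real.sinh (P/2) * (Real.exp ((D-2*g)/2) * Real.cosh (A/2))) := by
      calc (Real.exp ((D-2*hh)/2) * Real.sinh (P/2) * (1 - Real.exp (-(P+D-2*hh))))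
            * Real.sinh (A/2)
          ≤ Real.sinh ((P+D-2*hh)/2) * Real.sinh (A/2) := by
            apply mul_le_mul_of_nonneg_right ulow hsA.le
        _ ≤ (1+R) * (Real.sinh (P/2) * Real.sinh ((A+D-2*g)/2)) := high
        _ ≤ (1+R) * (Real.sinh (P/2) * (Real.exp ((D-2*g)/2) * Real.cosh (A/2))) := by
            apply mul_le_mul_of_nonneg_left
              (mul_le_mul_of_nonneg_left mup hsPpos.le) (by linarith)
    have d2 : Real.exp ((D-2*hh)/2) * (1 - Real.exp (-(P+D-2*hh))) * Real.sinh (A/2)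
        ≤ (1+R) * (Real.exp ((D-2*g)/2) * Real.cosh (A/2)) := by
      have d1' : (Real.exp ((D-2*hh)/2) * (1 - Real.exp (-(P+D-2*hh))) * Real.sinh (A/2))
            * Real.sinh (P/2)
          ≤ ((1+R) * (Real.exp ((D-2*g)/2) * Real.cosh (A/2))) * Real.sinh (P/2) := by
        calc (Real.exp ((D-2*hh)/2) * (1 - Real.exp (-(P+D-2*hh))) * Real.sinh (A/2))
              * Real.sinh (P/2)
            = (Real.exp ((D-2*hh)/2) * Real.sinh (P/2) * (1 - Real.exp (-(P+D-2*hh))))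
              * Real.sinh (A/2) := by ring
          _ ≤ (1+R) * (Real.sinh (P/2) * (Real.exp ((D-2*g)/2) * Real.cosh (A/2))) := d1
          _ = ((1+R) * (Real.exp ((D-2*g)/2) * Real.cosh (A/2))) * Real.sinh (P/2) := by ring
      exact le_of_mul_le_mul_right d1' hsPpos
    have d3 : Real.exp g * (1 - Real.exp (-(P+D-2*hh))) * Real.sinh (A/2)
        ≤ (1+R) * (Real.exp hh * Real.cosh (A/2)) := by
      have hmul := mul_le_mul_of_nonneg_right d2 (Real.exp_pos (g + hh - D/2)).le
      have eL : (Real.exp ((D-2*hh)/2) * (1 - Real.exp (-(P+D-2*hh))) * Real.sinh (A/2))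
            * Real.exp (g+hh-D/2)
          = Real.exp g * (1 - Real.exp (-(P+D-2*hh))) * Real.sinh (A/2) := by
        rw [show (Real.exp ((D-2*hh)/2) * (1 - Real.exp (-(P+D-2*hh))) * Real.sinh (A/2))
              * Real.exp (g+hh-D/2)
            = ((1 - Real.exp (-(P+D-2*hh))) * Real.sinh (A/2)) * Real.exp ((D-2*hh)/2)
              * Real.exp (g+hh-D/2) by ring]
        rw [exp_combine _ _ _ _ (by ring : (D-2*hh)/2 + (g+hh-D/2) = g)]
        ring
      have eR : ((1+R) * (Real.exp ((D-2*g)/2) * Real.cosh (A/2))) * Real.exp (g+hh-D/2)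
          = (1+R) * (Real.exp hh * Real.cosh (A/2)) := by
        rw [show ((1+R) * (Real.exp ((D-2*g)/2) * Real.cosh (A/2))) * Real.exp (g+hh-D/2)
            = ((1+R) * Real.cosh (A/2)) * Real.exp ((D-2*g)/2) * Real.exp (g+hh-D/2) by ring]
        rw [exp_combine _ _ _ _ (by ring : (D-2*g)/2 + (g+hh-D/2) = hh)]
        ring
      rw [eL, eR] at hmul
      exact hmul
    have d6 : Real.exp g * ((1-p)*(1-ε)) ≤ (1+R)*(1+ε) * Real.exp hh := by
      have d6' : (Real.exp g * ((1-p)*(1-ε))) * Real.sinh (A/2)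
          ≤ ((1+R)*(1+ε) * Real.exp hh) * Real.sinh (A/2) := by
        calc (Real.exp g * ((1-p)*(1-ε))) * Real.sinh (A/2)
            = (Real.exp g * (1-p) * Real.sinh (A/2)) * (1-ε) := by ring
          _ ≤ (Real.exp g * (1 - Real.exp (-(P+D-2*hh))) * Real.sinh (A/2)) * (1-ε) := by
              apply mul_le_mul_of_nonneg_right ?_ h1ε.le
              apply mul_le_mul_of_nonneg_right ?_ hsA.le
              apply mul_le_mul_of_nonneg_left (by linarith [hqP']) (Real.exp_pos g).le
          _ ≤ ((1+R) * (Real.exp hh * Real.cosh (A/2))) * (1-ε) := by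
              apply mul_le_mul_of_nonneg_right d3 h1ε.le
          _ = ((1+R) * Real.exp hh) * (Real.cosh (A/2) * (1-ε)) := by ring
          _ ≤ ((1+R) * Real.exp hh) * (Real.sinh (A/2) * (1+ε)) := by
              apply mul_le_mul_of_nonneg_left cothA
                (mul_nonneg (by linarith) (Real.exp_pos hh).le)
          _ = ((1+R)*(1+ε) * Real.exp hh) * Real.sinh (A/2) := by ring
      exact le_of_mul_le_mul_right d6' hsA
    have key : (1-4*ε) * ((1+R)*(1+ε)) ≤ (1-p)*(1-ε) := by
      rw [hp, hR]
      exact poly_one ε hε0 hε4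
    have t2' : (Real.exp g * (1-4*ε)) * ((1-p)*(1-ε)) ≤ Real.exp hh * ((1-p)*(1-ε)) := by
      calc (Real.exp g * (1-4*ε)) * ((1-p)*(1-ε))
          = (1-4*ε) * (Real.exp g * ((1-p)*(1-ε))) := by ring
        _ ≤ (1-4*ε) * ((1+R)*(1+ε) * Real.exp hh) := by
            apply mul_le_mul_of_nonneg_left d6 (by linarith)
        _ = ((1-4*ε) * ((1+R)*(1+ε))) * Real.exp hh := by ring
        _ ≤ ((1-p)*(1-ε)) * Real.exp hh := by
            apply mul_le_mul_of_nonneg_right key (Real.exp_pos hh).le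
        _ = Real.exp hh * ((1-p)*(1-ε)) := by ring
    exact le_of_mul_le_mul_right t2' (mul_pos (by linarith) h1ε)

lemma per_step (a b ε : ℝ) (n : ℕ) (x : ℕ → ℍ) (hb : 0 ≤ b)
    (hεdef : Real.exp (2*b-a) = ε) (hε4 : ε < 1/4)
    (hd : ∀ k, k < n → a ≤ dist (x k) (x (k+1)))
    (hG : ∀ k, k+2 ≤ n → gromov (x k) (x (k+2)) (x (k+1)) ≤ b)
    (k : ℕ) (hk : k+3 ≤ n) :
    Real.exp (gromov (x 0) (x (k+3)) (x (k+2))) * (1-4*ε)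
        ≤ Real.exp (gromov (x (k+1)) (x (k+3)) (x (k+2))) ∧
    Real.exp (gromov (x (k+1)) (x (k+3)) (x (k+2))) * (1-4*ε)
        ≤ Real.exp (gromov (x 0) (x (k+3)) (x (k+2))) := by
  have hε0 : 0 < ε := hεdef ▸ Real.exp_pos _
  have h2ε : (0:ℝ) < 1-2*ε := by linarith
  have h3ε : (0:ℝ) < 1-3*ε := by linarith
  have hεinv : ε * Real.exp (a-2*b) = 1 := by
    rw [← hεdef, ← Real.exp_add, show 2*b-a+(a-2*b) = 0 by ring, Real.exp_zero]
  have hab : 2*b < a := by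
    by_contra hcon
    push_neg at hcon
    have : Real.exp (a-2*b) ≤ 1 := Real.exp_le_one_iff.2 (by linarith)
    nlinarith [Real.exp_pos (a-2*b)]
  have ha0 : 0 < a := by linarith
  have hsa : 0 < Real.sinh (a/2) := by
    have : Real.sinh 0 < Real.sinh (a/2) := Real.sinh_lt_sinh.2 (by linarith)
    simpa using this
  have hN1 : (1:ℝ) ≤ 2*(1-3*ε)/(1-2*ε) := by rw [le_div_iff₀ h2ε]; linarith
  have CI := chain_inv a b ε n x hb hεdef hε4 hd hG
  have inv := (CI (k+1)).2 (by omega)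
  have gr2 := (CI (k+1)).1 (by omega)
  have gr3 := (CI (k+2)).1 (by omega)
  simp only [show k+1+1 = k+2 from rfl, show k+1+2 = k+3 from rfl,
    show k+2+1 = k+3 from rfl] at inv gr2 gr3
  have hgb : gromov (x (k+1)) (x (k+3)) (x (k+2)) ≤ b := by
    have := hG (k+1) (by omega)
    simpa using this
  have hA := hd (k+1) (by omega)
  have hD := hd (k+2) (by omega)
  have hP' : dist (x 0) (x (k+3)) = dist (x 0) (x (k+2)) + dist (x (k+2)) (x (k+3))
      - 2 * gromov (x 0) (x (k+3)) (x (k+2)) := dist_eq_gromov _ _ _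
  have hm' : dist (x (k+1)) (x (k+3)) = dist (x (k+1)) (x (k+2)) + dist (x (k+2)) (x (k+3))
      - 2 * gromov (x (k+1)) (x (k+3)) (x (k+2)) := dist_eq_gromov _ _ _
  -- convert growth bounds
  have hsP : 2*(1-3*ε)/(1-2*ε) * Real.sinh (a/2) ≤ Real.sinh (dist (x 0) (x (k+2)) / 2) := by
    have h1 : 2*(1-3*ε)/(1-2*ε) * Real.sinh (a/2)
        ≤ Real.sinh (a/2) * (2*(1-3*ε)/(1-2*ε))^(k+1) := by
      have := mul_le_mul_of_nonneg_left (le_self_pow₀ hN1 (by omega : k+1 ≠ 0)) hsa.le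
      linarith
    have h2 : Real.sinh (a/2) * (2*(1-3*ε)/(1-2*ε))^(k+1) ≤ sig (x 0) (x (k+2)) := gr2
    unfold sig at h2
    linarith
  have hsP' : 2*(1-3*ε)/(1-2*ε) * Real.sinh (a/2)
      ≤ Real.sinh ((dist (x 0) (x (k+2)) + dist (x (k+2)) (x (k+3))
          - 2 * gromov (x 0) (x (k+3)) (x (k+2))) / 2) := by
    have h1 : 2*(1-3*ε)/(1-2*ε) * Real.sinh (a/2)
        ≤ Real.sinh (a/2) * (2*(1-3*ε)/(1-2*ε))^(k+2) := by
      have := mul_le_mul_of_nonneg_left (le_self_pow₀ hN1 (by omega : k+2 ≠ 0)) hsa.le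
      linarith
    have h2 : Real.sinh (a/2) * (2*(1-3*ε)/(1-2*ε))^(k+2) ≤ sig (x 0) (x (k+3)) := gr3
    unfold sig at h2
    rw [hP'] at h2
    linarith
  have inv' : sig (x 0) (x (k+1)) * Real.sinh (dist (x (k+2)) (x (k+3)) / 2)
      ≤ ε/(1-2*ε) * (Real.sinh (dist (x 0) (x (k+2)) / 2)
        * Real.sinh ((dist (x (k+1)) (x (k+2)) + dist (x (k+2)) (x (k+3))
          - 2 * gromov (x (k+1)) (x (k+3)) (x (k+2))) / 2)) := by
    have h2 := inv
    unfold sig at h2 ⊢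
    rw [hm'] at h2
    exact h2
  have pt1 := sig_ptolemy (x 0) (x (k+1)) (x (k+2)) (x (k+3))
  have pt2 := sig_ptolemy (x 0) (x (k+1)) (x (k+3)) (x (k+2))
  rw [sig_comm (x (k+3)) (x (k+2))] at pt2
  have pt1' : Real.sinh (dist (x 0) (x (k+2)) / 2)
        * Real.sinh ((dist (x (k+1)) (x (k+2)) + dist (x (k+2)) (x (k+3))
          - 2 * gromov (x (k+1)) (x (k+3)) (x (k+2))) / 2)
      ≤ Real.sinh ((dist (x 0) (x (k+2)) + dist (x (k+2)) (x (k+3))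
          - 2 * gromov (x 0) (x (k+3)) (x (k+2))) / 2)
          * Real.sinh (dist (x (k+1)) (x (k+2)) / 2)
        + sig (x 0) (x (k+1)) * Real.sinh (dist (x (k+2)) (x (k+3)) / 2) := by
    have h2 := pt1
    unfold sig at h2 ⊢
    rw [hm', hP'] at h2
    exact h2
  have pt2' : Real.sinh ((dist (x 0) (x (k+2)) + dist (x (k+2)) (x (k+3))
          - 2 * gromov (x 0) (x (k+3)) (x (k+2))) / 2)
          * Real.sinh (dist (x (k+1)) (x (k+2)) / 2)
      ≤ Real.sinh (dist (x 0) (x (k+2)) / 2)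
        * Real.sinh ((dist (x (k+1)) (x (k+2)) + dist (x (k+2)) (x (k+3))
          - 2 * gromov (x (k+1)) (x (k+3)) (x (k+2))) / 2)
        + sig (x 0) (x (k+1)) * Real.sinh (dist (x (k+2)) (x (k+3)) / 2) := by
    have h2 := pt2
    unfold sig at h2 ⊢
    rw [hm', hP'] at h2
    exact h2
  have hP'0 : 0 ≤ dist (x 0) (x (k+2)) + dist (x (k+2)) (x (k+3))
      - 2 * gromov (x 0) (x (k+3)) (x (k+2)) := by
    rw [← hP']; exact dist_nonneg
  exact endgame a b ε (dist (x 0) (x (k+2))) (dist (x (k+1)) (x (k+2)))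
    (dist (x (k+2)) (x (k+3))) (gromov (x (k+1)) (x (k+3)) (x (k+2)))
    (gromov (x 0) (x (k+3)) (x (k+2))) (sig (x 0) (x (k+1)))
    hb hεdef hε4 hA hD (gromov_nonneg _ _ _) hgb (gromov_nonneg _ _ _)
    dist_nonneg hP'0 (sig_nonneg _ _) hsP hsP' inv' pt1' pt2'

lemma dist_zero_sum (x : ℕ → ℍ) (k : ℕ) :
    dist (x 0) (x (k+1)) = (∑ j ∈ Finset.range (k+1), dist (x j) (x (j+1)))
      - 2 * ∑ j ∈ Finset.range k, gromov (x 0) (x (j+2)) (x (j+1)) := by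
  induction k with
  | zero => simp
  | succ k ih =>
    rw [Finset.sum_range_succ (fun j => dist (x j) (x (j+1))) (k+1),
      Finset.sum_range_succ (fun j => gromov (x 0) (x (j+2)) (x (j+1))) k]
    have hg := dist_eq_gromov (x 0) (x (k+2)) (x (k+1))
    rw [show k+1+1 = k+2 from rfl, hg, ih]
    ring

lemma tension_eq (x : ℕ → ℍ) (k : ℕ) :
    tension (k+2) x = 2 * ∑ j ∈ Finset.range (k+1),
      (gromov (x 0) (x (j+2)) (x (j+1)) - gromov (x j) (x (j+2)) (x (j+1))) := by
  unfold tension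
  rw [show k+2-1 = k+1 from rfl, show k+2-2 = k from rfl]
  have h1 : ∀ j ∈ Finset.range (k+1), dist (x j) (x (j+2))
      = dist (x j) (x (j+1)) + dist (x (j+1)) (x (j+2))
        - 2 * gromov (x j) (x (j+2)) (x (j+1)) := fun j _ => dist_eq_gromov _ _ _
  rw [Finset.sum_congr rfl h1]
  rw [show k+2 = (k+1)+1 from rfl, dist_zero_sum x (k+1)]
  rw [Finset.sum_range_succ (fun j => dist (x j) (x (j+1))) (k+1)]
  simp only [Finset.sum_sub_distrib, Finset.sum_add_distrib, ← Finset.mul_sum]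
  have e2 : ∑ j ∈ Finset.range (k+1), dist (x (j+1)) (x (j+2))
      = (∑ j ∈ Finset.range k, dist (x (j+1)) (x (j+2))) + dist (x (k+1)) (x (k+2)) := by
    rw [Finset.sum_range_succ]
  rw [e2]
  ring

end AvalancheAux

set_option maxHeartbeats 4000000 in
theorem avalanche_principle_exponential_form (c a b : ℝ) (hc : 1 < c) (ha : 0 ≤ a) (hb : 0 ≤ b)
    (h : a - 2 * b > Real.log 4 + Real.log (c / (c - 1))) :
    GoodPair a b ∧
      ∀ n : ℕ, 2 ≤ n → ∀ x : ℕ → UpperHalfPlane, GoodChain a b n x →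
        |tension n x| ≤ 8 * c * ((n : ℝ) - 2) * Real.exp (2 * b - a) := by
  have hc0 : (0:ℝ) < c := by linarith
  have hc1 : (0:ℝ) < c - 1 := by linarith
  have hcc : (1:ℝ) < c/(c-1) := by rw [lt_div_iff₀ hc1]; linarith
  have hlogpos : 0 < Real.log (c/(c-1)) := Real.log_pos hcc
  have hlog4 : Real.log 4 < a - 2*b := by linarith
  have h4a : (4:ℝ) < Real.exp (a - 2*b) := by
    have := Real.exp_lt_exp.2 hlog4
    rwa [Real.exp_log (by norm_num : (0:ℝ) < 4)] at this
  have hfull : 4*c/(c-1) < Real.exp (a-2*b) := by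
    have hsum : Real.log 4 + Real.log (c/(c-1)) = Real.log (4*c/(c-1)) := by
      rw [← Real.log_mul (by norm_num) (ne_of_gt (by positivity))]
      rw [mul_div_assoc]
    have h1 : Real.log (4*c/(c-1)) < a - 2*b := by rw [← hsum]; exact h
    have := Real.exp_lt_exp.2 h1
    rwa [Real.exp_log (by positivity)] at this
  obtain ⟨ε, hεdef⟩ : ∃ t : ℝ, Real.exp (2*b-a) = t := ⟨_, rfl⟩
  have hε0 : 0 < ε := hεdef ▸ Real.exp_pos _
  have hεinv : ε * Real.exp (a-2*b) = 1 := by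
    rw [← hεdef, ← Real.exp_add, show 2*b-a+(a-2*b) = 0 by ring, Real.exp_zero]
  have hc4 : 4*c*ε < c - 1 := by
    have h2 := mul_lt_mul_of_pos_left hfull hε0
    rw [hεinv] at h2
    have e3 : ε * (4*c/(c-1)) * (c-1) = 4*c*ε := by field_simp
    nlinarith [mul_lt_mul_of_pos_right h2 hc1]
  have hε4 : ε < 1/4 := by nlinarith [hc4, hc0, mul_pos hc0 hε0]
  constructor
  · refine ⟨ha, hb, ?_⟩
    have hs0 : 0 < Real.exp (a/2) := Real.exp_pos _
    have heb0 : 0 < Real.exp b := Real.exp_pos _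
    have i1 : Real.exp (a-b) * Real.exp b = Real.exp (a/2) * Real.exp (a/2) := by
      rw [← Real.exp_add, ← Real.exp_add]; ring_nf
    have i2 : Real.exp (-(a-b)) * Real.exp (a-b) = 1 := by
      rw [← Real.exp_add]; simp
    have i3 : Real.exp (-(a/2)) * Real.exp (a/2) = 1 := by
      rw [← Real.exp_add]; simp
    have hsq : Real.exp b * Real.exp b < Real.exp (a/2) * Real.exp (a/2) / 4 := by
      have e2 : Real.exp b * Real.exp b = Real.exp (2*b) := by rw [← Real.exp_add]; ring_nf
      have e3 : Real.exp (a-2*b) * Real.exp (2*b) = Real.exp (a/2) * Real.exp (a/2) := by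
        rw [← Real.exp_add, ← Real.exp_add]; ring_nf
      nlinarith [Real.exp_pos (2*b), h4a]
    have h2eb : 2 * Real.exp b < Real.exp (a/2) := by
      nlinarith [hsq, heb0, hs0]
    have hE1 : 2 * Real.exp (a/2) < Real.exp (a-b) := by
      nlinarith [mul_pos (Real.exp_pos (a-b)) (show 0 < Real.exp (a/2)/2 - Real.exp b by linarith),
        i1, hs0]
    have hE2 : Real.exp (-(a-b)) < Real.exp (-(a/2)) := by
      nlinarith [i2, i3, hE1, hs0, Real.exp_pos (-(a-b)), Real.exp_pos (-(a/2)),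
        mul_pos (Real.exp_pos (-(a-b))) (show 0 < Real.exp (a-b) - Real.exp (a/2) by linarith [hs0])]
    rw [Real.sinh_eq, Real.sinh_eq]
    have := Real.exp_pos (-(a/2))
    linarith
  · intro n hn x hxg
    obtain ⟨hx1, hx2⟩ := hxg
    have hd : ∀ k, k < n → a ≤ dist (x k) (x (k+1)) := by
      intro k hk
      have h' : a ≤ dist (x (k+1)) (x k) := hx1 k hk
      rwa [dist_comm] at h'
    have hG : ∀ k, k+2 ≤ n → gromov (x k) (x (k+2)) (x (k+1)) ≤ b := by
      intro k hk
      have := hx2 (k+1) (by omega) (by omega)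
      simpa using this
    obtain ⟨m, rfl⟩ : ∃ m, n = m + 2 := ⟨n - 2, by omega⟩
    rw [AvalancheAux.tension_eq x m]
    have hstep : ∀ j ∈ Finset.range m,
        |gromov (x 0) (x (j+1+2)) (x (j+1+1)) - gromov (x (j+1)) (x (j+1+2)) (x (j+1+1))|
          ≤ 4*c*ε := by
      intro j hj
      rw [Finset.mem_range] at hj
      obtain ⟨e1, e2⟩ := AvalancheAux.per_step a b ε (m+2) x hb hεdef hε4 hd hG j (by omega)
      have h4ε0 : (0:ℝ) < 1 - 4*ε := by nlinarith [hc4, hc0, mul_pos hc0 hε0]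
      have hfac : (1:ℝ) ≤ (1-4*ε)*(1+4*c*ε) := by nlinarith [hε0]
      have hcε0 : (0:ℝ) ≤ 4*c*ε := by positivity
      have hup : gromov (x 0) (x (j+3)) (x (j+2))
          ≤ gromov (x (j+1)) (x (j+3)) (x (j+2)) + 4*c*ε := by
        have k1 : Real.exp (gromov (x 0) (x (j+3)) (x (j+2)))
            ≤ Real.exp (gromov (x (j+1)) (x (j+3)) (x (j+2)) + 4*c*ε) := by
          rw [Real.exp_add]
          have s1 : Real.exp (gromov (x 0) (x (j+3)) (x (j+2)))
              ≤ (Real.exp (gromov (x 0) (x (j+3)) (x (j+2))) * (1-4*ε)) * (1+4*c*ε) := by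
            nlinarith [Real.exp_pos (gromov (x 0) (x (j+3)) (x (j+2))), hfac]
          have s2 : (Real.exp (gromov (x 0) (x (j+3)) (x (j+2))) * (1-4*ε)) * (1+4*c*ε)
              ≤ Real.exp (gromov (x (j+1)) (x (j+3)) (x (j+2))) * (1+4*c*ε) := by
            apply mul_le_mul_of_nonneg_right e1 (by linarith)
          have s3 : Real.exp (gromov (x (j+1)) (x (j+3)) (x (j+2))) * (1+4*c*ε)
              ≤ Real.exp (gromov (x (j+1)) (x (j+3)) (x (j+2))) * Real.exp (4*c*ε) := by
            apply mul_le_mul_of_nonneg_left ?_ (Real.exp_pos _).le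
            linarith [Real.add_one_le_exp (4*c*ε)]
          linarith
        exact by linarith [Real.exp_le_exp.1 k1]
      have hdown : gromov (x (j+1)) (x (j+3)) (x (j+2))
          ≤ gromov (x 0) (x (j+3)) (x (j+2)) + 4*c*ε := by
        have k1 : Real.exp (gromov (x (j+1)) (x (j+3)) (x (j+2)))
            ≤ Real.exp (gromov (x 0) (x (j+3)) (x (j+2)) + 4*c*ε) := by
          rw [Real.exp_add]
          have s1 : Real.exp (gromov (x (j+1)) (x (j+3)) (x (j+2)))
              ≤ (Real.exp (gromov (x (j+1)) (x (j+3)) (x (j+2))) * (1-4*ε)) * (1+4*c*ε) := by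
            nlinarith [Real.exp_pos (gromov (x (j+1)) (x (j+3)) (x (j+2))), hfac]
          have s2 : (Real.exp (gromov (x (j+1)) (x (j+3)) (x (j+2))) * (1-4*ε)) * (1+4*c*ε)
              ≤ Real.exp (gromov (x 0) (x (j+3)) (x (j+2))) * (1+4*c*ε) := by
            apply mul_le_mul_of_nonneg_right e2 (by linarith)
          have s3 : Real.exp (gromov (x 0) (x (j+3)) (x (j+2))) * (1+4*c*ε)
              ≤ Real.exp (gromov (x 0) (x (j+3)) (x (j+2))) * Real.exp (4*c*ε) := by
            apply mul_le_mul_of_nonneg_left ?_ (Real.exp_pos _).le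
            linarith [Real.add_one_le_exp (4*c*ε)]
          linarith
        exact by linarith [Real.exp_le_exp.1 k1]
      rw [show j+1+2 = j+3 from rfl, show j+1+1 = j+2 from rfl]
      exact abs_sub_le_iff.2 ⟨by linarith, by linarith⟩
    have habs : |∑ j ∈ Finset.range (m+1),
        (gromov (x 0) (x (j+2)) (x (j+1)) - gromov (x j) (x (j+2)) (x (j+1)))|
        ≤ m * (4*c*ε) := by
      rw [Finset.sum_range_succ'
        (fun j => gromov (x 0) (x (j+2)) (x (j+1)) - gromov (x j) (x (j+2)) (x (j+1))) m]
      simp only [sub_self, add_zero]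
      calc |∑ j ∈ Finset.range m,
            (gromov (x 0) (x (j+1+2)) (x (j+1+1)) - gromov (x (j+1)) (x (j+1+2)) (x (j+1+1)))|
          ≤ ∑ j ∈ Finset.range m,
            |gromov (x 0) (x (j+1+2)) (x (j+1+1)) - gromov (x (j+1)) (x (j+1+2)) (x (j+1+1))| :=
            Finset.abs_sum_le_sum_abs _ _
        _ ≤ (Finset.range m).card • (4*c*ε) := Finset.sum_le_card_nsmul _ _ _ hstep
        _ = m * (4*c*ε) := by simp [nsmul_eq_mul]
    calc |2 * ∑ j ∈ Finset.range (m+1),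
          (gromov (x 0) (x (j+2)) (x (j+1)) - gromov (x j) (x (j+2)) (x (j+1)))|
        = 2 * |∑ j ∈ Finset.range (m+1),
          (gromov (x 0) (x (j+2)) (x (j+1)) - gromov (x j) (x (j+2)) (x (j+1)))| := by
          rw [abs_mul]
          norm_num
      _ ≤ 2 * (m * (4*c*ε)) := by linarith [habs]
      _ = 8 * c * ((↑(m+2):ℝ) - 2) * ε := by push_cast; ring
      _ = 8 * c * ((↑(m+2):ℝ) - 2) * Real.exp (2 * b - a) := by rw [hεdef]
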